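/- Let S and S' be continuous information systems and H an approximable mapping from S to S'. Let Ĥ = S(F(H)) be the approximable mapping from S(F(S)) to S(F(S')) obtained by applying F and then S to H (so that 𝔛 Ĥ Y iff there is E ∈ 𝔛 with E H Y). Then H ∘ S_{S'} = S_S ∘ Ĥ, where S_S, S_{S'} are the approximable mappings given by X S_S Y ⇔ X ⊢ Y and X S_{S'} Y ⇔ X ⊢' Y. -/

import Mathlib

open scoped Classical

/-! ### Continuous information frames -/

structure InfFrame (A : Type*) where
  Con : A → Set (Finset A)
  ent : A → Finset A → A → Prop

namespace InfFrame

variable {A B C : Type*}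

/-- `X ⊨_i Y` : every element of `Y` is entailed by `X` at `i`. -/
def entS (𝔄 : InfFrame A) (i : A) (X Y : Finset A) : Prop :=
  ∀ b ∈ Y, 𝔄.ent i X b

/-- The axioms of a continuous information frame. -/
structure IsCIF (𝔄 : InfFrame A) : Prop where
  self_con : ∀ i : A, ({i} : Finset A) ∈ 𝔄.Con i
  con_sub : ∀ (i : A) (X Y : Finset A), Y ⊆ X → X ∈ 𝔄.Con i → Y ∈ 𝔄.Con i
  sound : ∀ (i : A) (X Y : Finset A), X ∈ 𝔄.Con i → 𝔄.entS i X Y → Y ∈ 𝔄.Con i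
  weaken : ∀ (i : A) (X Y : Finset A) (a : A),
    X ∈ 𝔄.Con i → Y ∈ 𝔄.Con i → X ⊆ Y → 𝔄.ent i X a → 𝔄.ent i Y a
  cut : ∀ (i : A) (X Y : Finset A) (a : A),
    X ∈ 𝔄.Con i → 𝔄.entS i X Y → 𝔄.ent i Y a → 𝔄.ent i X a
  con_transfer : ∀ i j : A, ({i} : Finset A) ∈ 𝔄.Con j → 𝔄.Con i ⊆ 𝔄.Con j
  ent_transfer : ∀ (i j : A) (X : Finset A) (a : A),
    ({i} : Finset A) ∈ 𝔄.Con j → X ∈ 𝔄.Con i → 𝔄.ent i X a → 𝔄.ent j X a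
  interp : ∀ (i : A) (X Y : Finset A), X ∈ 𝔄.Con i → 𝔄.entS i X Y →
    ∃ e : A, ∃ Z ∈ 𝔄.Con e, 𝔄.entS i X ({e} ∪ Z) ∧ 𝔄.entS e Z Y

/-- Condition (S): a continuous information frame is strong. -/
def Strong (𝔄 : InfFrame A) : Prop :=
  ∀ i : A, ∀ X ∈ 𝔄.Con i, X ≠ {i} → 𝔄.entS i {i} X

/-- Condition (T): `t` is a truth element. -/
def IsTruth (𝔄 : InfFrame A) (t : A) : Prop :=
  ∀ i : A, 𝔄.ent i ∅ t

/-- Approximable families between continuous information frames. -/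
structure IsApproxFam (𝔄 : InfFrame A) (𝔅 : InfFrame B)
    (H : A → Finset A → B → Prop) : Prop where
  af1 : ∀ (i : A) (X : Finset A) (k : B) (Y : Finset B) (b : B),
    X ∈ 𝔄.Con i → Y ∈ 𝔅.Con k → (∀ c ∈ ({k} : Finset B) ∪ Y, H i X c) →
    𝔅.ent k Y b → H i X b
  af2 : ∀ (i : A) (X X' : Finset A) (b : B),
    X ∈ 𝔄.Con i → X' ∈ 𝔄.Con i → X ⊆ X' → H i X b → H i X' b
  af3 : ∀ (i : A) (X X' : Finset A) (b : B),
    X ∈ 𝔄.Con i → X' ∈ 𝔄.Con i → 𝔄.entS i X X' → H i X' b → H i X b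
  af4 : ∀ (i j : A) (X : Finset A) (b : B),
    ({i} : Finset A) ∈ 𝔄.Con j → X ∈ 𝔄.Con i → H i X b → H j X b
  af5 : ∀ (i : A) (X : Finset A) (F : Finset B),
    X ∈ 𝔄.Con i → (∀ c ∈ F, H i X c) →
    ∃ c : A, ∃ U ∈ 𝔄.Con c, ∃ e : B, ∃ V ∈ 𝔅.Con e,
      𝔄.entS i X ({c} ∪ U) ∧ (∀ d ∈ ({e} : Finset B) ∪ V, H c U d) ∧
      ∀ d ∈ F, 𝔅.ent e V d

/-- `H` respects the truth elements `t` and `t'`. -/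
def RespectsTruth (H : A → Finset A → B → Prop) (t : A) (t' : B) : Prop :=
  H t ∅ t'

/-- Composition of approximable families (`𝔅` is the middle frame). -/
def compFam (𝔅 : InfFrame B)
    (G : A → Finset A → B → Prop) (H : B → Finset B → C → Prop) :
    A → Finset A → C → Prop :=
  fun i X a => ∃ e : B, ∃ V ∈ 𝔅.Con e,
    (∀ c ∈ ({e} : Finset B) ∪ V, G i X c) ∧ H e V a

/-- Equality of families of relations `H_i ⊆ Con_i × B`. -/
def FamEq (𝔄 : InfFrame A) (H K : A → Finset A → B → Prop) : Prop :=
  ∀ i : A, ∀ X ∈ 𝔄.Con i, ∀ b : B, H i X b ↔ K i X b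

end InfFrame

/-! ### (Simplified) continuous information systems -/

structure InfSys (S : Type*) where
  Con : Set (Finset S)
  ent : Finset S → S → Prop

namespace InfSys

variable {S T U : Type*}

/-- `X ⊢ Y` : every element of `Y` is entailed by `X`. -/
def entS (𝕊 : InfSys S) (X Y : Finset S) : Prop := ∀ b ∈ Y, 𝕊.ent X b

/-- The axioms of a simplified continuous information system. -/
structure IsSCIS (𝕊 : InfSys S) : Prop where
  singleton_con : ∀ a : S, ({a} : Finset S) ∈ 𝕊.Con
  weaken : ∀ (X Y : Finset S) (a : S),
    X ∈ 𝕊.Con → Y ∈ 𝕊.Con → X ⊆ Y → 𝕊.ent X a → 𝕊.ent Y a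
  cut : ∀ (X Y : Finset S) (a : S),
    X ∈ 𝕊.Con → Y ∈ 𝕊.Con → 𝕊.entS X Y → 𝕊.ent Y a → 𝕊.ent X a
  interp : ∀ X ∈ 𝕊.Con, ∀ a : S, 𝕊.ent X a →
    ∃ Z ∈ 𝕊.Con, 𝕊.entS X Z ∧ 𝕊.ent Z a
  dir : ∀ X ∈ 𝕊.Con, ∀ F : Finset S, 𝕊.entS X F →
    ∃ Z ∈ 𝕊.Con, F ⊆ Z ∧ 𝕊.entS X Z

/-- The axioms of a continuous information system. -/
structure IsCIS (𝕊 : InfSys S) extends IsSCIS 𝕊 : Prop where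
  insert_con : ∀ X ∈ 𝕊.Con, ∀ a : S, 𝕊.ent X a → X ∪ {a} ∈ 𝕊.Con

/-- Approximable mappings between (simplified) continuous information systems. -/
structure IsApproxMap (𝕊 : InfSys S) (𝕋 : InfSys T)
    (H : Finset S → T → Prop) : Prop where
  am1 : ∀ X ∈ 𝕊.Con, ∀ Y ∈ 𝕋.Con, ∀ b : T,
    (∀ c ∈ Y, H X c) → 𝕋.ent Y b → H X b
  am2 : ∀ X ∈ 𝕊.Con, ∀ X' ∈ 𝕊.Con, ∀ b : T, X' ⊆ X → H X' b → H X b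
  am3 : ∀ X ∈ 𝕊.Con, ∀ X' ∈ 𝕊.Con, ∀ b : T, 𝕊.entS X X' → H X' b → H X b
  am4 : ∀ X ∈ 𝕊.Con, ∀ b : T, H X b →
    ∃ Z ∈ 𝕊.Con, ∃ Z' ∈ 𝕋.Con, 𝕊.entS X Z ∧ (∀ c ∈ Z', H Z c) ∧ 𝕋.ent Z' b
  am5 : ∀ X ∈ 𝕊.Con, ∀ F : Finset T, (∀ c ∈ F, H X c) →
    ∃ Z ∈ 𝕋.Con, F ⊆ Z ∧ ∀ c ∈ Z, H X c

/-- Relational composition of approximable mappings (`𝕋` is the middle system). -/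
def compMap (𝕋 : InfSys T) (H : Finset S → T → Prop) (G : Finset T → U → Prop) :
    Finset S → U → Prop :=
  fun X u => ∃ Y ∈ 𝕋.Con, (∀ b ∈ Y, H X b) ∧ G Y u

/-- Equality of relations `H ⊆ Con × U`. -/
def MapEq (𝕊 : InfSys S) (H K : Finset S → U → Prop) : Prop :=
  ∀ X ∈ 𝕊.Con, ∀ u : U, H X u ↔ K X u

end InfSys

/-! ### The constructions F, S, T and W -/

/-- The tokens of the frame `F(𝕊)`: the consistent sets of `𝕊`. -/
abbrev ConTok {S : Type*} (𝕊 : InfSys S) : Type _ := {X : Finset S // X ∈ 𝕊.Con}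

/-- The frame `F(𝕊)` associated with a simplified continuous information system. -/
def Fframe {S : Type*} (𝕊 : InfSys S) : InfFrame (ConTok 𝕊) where
  Con X := {𝔛 | 𝔛 = {X} ∨ ∀ Y ∈ 𝔛, 𝕊.entS X.1 Y.1}
  ent X 𝔛 Y := ∃ E ∈ 𝔛 ∪ ({X} : Finset (ConTok 𝕊)), 𝕊.entS E.1 Y.1

/-- The action of `F` on approximable mappings. -/
def Fmap {S T : Type*} (𝕊 : InfSys S) (𝕋 : InfSys T) (H : Finset S → T → Prop) :
    ConTok 𝕊 → Finset (ConTok 𝕊) → ConTok 𝕋 → Prop :=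
  fun X 𝔛 Y => ∃ E ∈ 𝔛 ∪ ({X} : Finset (ConTok 𝕊)), ∀ b ∈ Y.1, H E.1 b

/-- The information system `S(𝔄)` associated with a (strong) continuous information frame. -/
def Ssys {A : Type*} (𝔄 : InfFrame A) : InfSys A where
  Con := {X | ∃ a : A, ∃ Xb ∈ 𝔄.Con a, X = Xb ∪ {a}}
  ent X c := ∃ a : A, ∃ Xb ∈ 𝔄.Con a, X = Xb ∪ {a} ∧
    (𝔄.ent a Xb c ∨ 𝔄.ent a {a} c)

/-- The action of `S` on approximable families. -/
def Smap {A B : Type*} (𝔄 : InfFrame A) (H : A → Finset A → B → Prop) :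
    Finset A → B → Prop :=
  fun X b => ∃ a : A, ∃ Xb ∈ 𝔄.Con a, X = Xb ∪ {a} ∧ (H a Xb b ∨ H a {a} b)

/-- The tokens of the frame `T(𝔄)`: pairs `(a, X)` with `X ∈ Con_a`. -/
abbrev TTok {A : Type*} (𝔄 : InfFrame A) : Type _ := {p : A × Finset A // p.2 ∈ 𝔄.Con p.1}

/-- The strong frame `T(𝔄)` associated with a continuous information frame. -/
def Tframe {A : Type*} (𝔄 : InfFrame A) : InfFrame (TTok 𝔄) where
  Con aX := {𝔜 | 𝔜 = {aX} ∨ ∀ bY ∈ 𝔜, 𝔄.entS aX.1.1 aX.1.2 ({bY.1.1} ∪ bY.1.2)}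
  ent aX 𝔛 eV := ∃ cZ ∈ 𝔛 ∪ ({aX} : Finset (TTok 𝔄)),
    𝔄.entS cZ.1.1 cZ.1.2 ({eV.1.1} ∪ eV.1.2)

/-- The action of `T` on approximable families. -/
def Tmap {A B : Type*} (𝔄 : InfFrame A) (𝔅 : InfFrame B)
    (H : A → Finset A → B → Prop) :
    TTok 𝔄 → Finset (TTok 𝔄) → TTok 𝔅 → Prop :=
  fun aX 𝔛 bY => ∃ cZ ∈ 𝔛 ∪ ({aX} : Finset (TTok 𝔄)),
    ∀ d ∈ ({bY.1.1} : Finset B) ∪ bY.1.2, H cZ.1.1 cZ.1.2 d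

/-- Removing the adjoined truth token: `X \ {t}` as a finite subset of `A`. -/
noncomputable def unsome {A : Type*} (X : Finset (Option A)) : Finset A :=
  X.preimage some (Option.some_injective A).injOn

/-- The frame `W(𝔄)`: `𝔄` extended by a (fresh) truth element `none`. -/
def Wframe {A : Type*} (𝔄 : InfFrame A) : InfFrame (Option A) where
  Con a :=
    match a with
    | some a => {X | ∃ Y ∈ 𝔄.Con a, X = Y.image some ∨ X = Y.image some ∪ {none}}
    | none => {X | X = {none} ∨ X = ∅}
  ent a X c :=
    match a, c with
    | _, none => True
    | none, some _ => False
    | some a', some c' => 𝔄.ent a' (unsome X) c'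

/-- The approximable mapping `S_𝕊 : 𝕊 ⟶ S(F(𝕊))`: `X S_𝕊 Y ⇔ X ⊢ Y`. -/
def SSmap {S : Type*} (𝕊 : InfSys S) : Finset S → ConTok 𝕊 → Prop :=
  fun X Y => 𝕊.entS X Y.1

/-- Lemma 15 (`lem-trtau`): naturality of `S_𝕊`: `H ∘ S_𝕋 = S_𝕊 ∘ S(F(H))`. -/
theorem SSmap_natural {S T : Type*} (𝕊 : InfSys S) (𝕋 : InfSys T)
    (hS : 𝕊.IsCIS) (hT : 𝕋.IsCIS) (H : Finset S → T → Prop)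
    (hH : InfSys.IsApproxMap 𝕊 𝕋 H) :
    InfSys.MapEq 𝕊
      (InfSys.compMap 𝕋 H (SSmap 𝕋))
      (InfSys.compMap (Ssys (Fframe 𝕊)) (SSmap 𝕊)
        (Smap (Fframe 𝕊) (Fmap 𝕊 𝕋 H))) := by
  intro X hX u
  constructor
  · rintro ⟨Y, hY, hHXY, hYu⟩
    have hHXb : ∀ b ∈ u.1, H X b := fun b hb => hH.am1 X hX Y hY b hHXY (hYu b hb)
    have h4 : ∀ b ∈ u.1, ∃ Z ∈ 𝕊.Con, 𝕊.entS X Z ∧ H Z b := by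
      intro b hb
      obtain ⟨Z, hZ, Z', hZ', hXZ, hZZ', hZ'b⟩ := hH.am4 X hX b (hHXb b hb)
      exact ⟨Z, hZ, hXZ, hH.am1 Z hZ Z' hZ' b hZZ' hZ'b⟩
    choose! Zf hZf hXZf hHZf using h4
    have hXF : 𝕊.entS X (u.1.biUnion Zf) := by
      intro s hs
      simp only [Finset.mem_biUnion] at hs
      obtain ⟨b, hb, hsb⟩ := hs
      exact hXZf b hb s hsb
    obtain ⟨Z, hZ, hFZ, hXZ⟩ := hS.dir X hX _ hXF
    refine ⟨{⟨Z, hZ⟩}, ⟨⟨Z, hZ⟩, {⟨Z, hZ⟩}, Or.inl rfl, by simp⟩, ?_, ?_⟩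
    · intro B hB
      simp only [Finset.mem_singleton] at hB
      subst hB
      exact hXZ
    · refine ⟨⟨Z, hZ⟩, {⟨Z, hZ⟩}, Or.inl rfl, by simp,
        Or.inl ⟨⟨Z, hZ⟩, by simp, ?_⟩⟩
      intro b hb
      exact hH.am2 Z hZ (Zf b) (hZf b hb) b
        ((Finset.subset_biUnion_of_mem Zf hb).trans hFZ) (hHZf b hb)
  · rintro ⟨𝔜, h𝔜Con, hSS, a, Xb, hXbCon, h𝔜eq, hFm⟩
    have hE : ∃ E ∈ 𝔜, ∀ b ∈ u.1, H E.1 b := by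
      rcases hFm with hFm | hFm
      · obtain ⟨E, hEmem, hEH⟩ := hFm
        have hor : E ∈ Xb ∨ E = a := Or.symm (show E = a ∨ E ∈ Xb by simpa [Finset.mem_union] using hEmem)
        refine ⟨E, ?_, hEH⟩
        subst h𝔜eq
        simp only [Finset.mem_union, Finset.mem_singleton]
        exact hor
      · obtain ⟨E, hEmem, hEH⟩ := hFm
        have : E = a := by simpa using hEmem
        subst this
        refine ⟨E, ?_, hEH⟩
        subst h𝔜eq
        simp
    obtain ⟨E, hEmem, hEH⟩ := hE
    have hXE : 𝕊.entS X E.1 := hSS E hEmem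
    have hHXb : ∀ b ∈ u.1, H X b :=
      fun b hb => hH.am3 X hX E.1 E.2 b hXE (hEH b hb)
    have h4 : ∀ b ∈ u.1, ∃ Z' ∈ 𝕋.Con, (∀ c ∈ Z', H X c) ∧ 𝕋.ent Z' b := by
      intro b hb
      obtain ⟨Z, hZ, Z', hZ', hXZ, hZZ', hZ'b⟩ := hH.am4 X hX b (hHXb b hb)
      exact ⟨Z', hZ', fun c hc => hH.am3 X hX Z hZ c hXZ (hZZ' c hc), hZ'b⟩
    choose! Zf hZf hHZf hentZf using h4
    have hall : ∀ c ∈ u.1.biUnion Zf, H X c := by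
      intro c hc
      simp only [Finset.mem_biUnion] at hc
      obtain ⟨b, hb, hcb⟩ := hc
      exact hHZf b hb c hcb
    obtain ⟨Y, hY, hFY, hYH⟩ := hH.am5 X hX _ hall
    refine ⟨Y, hY, hYH, fun b hb => ?_⟩
    exact hT.weaken (Zf b) Y b (hZf b hb) hY
      ((Finset.subset_biUnion_of_mem Zf hb).trans hFY) (hentZf b hb)
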